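/- Let p, q be positive integers with d = gcd(p,q) and let ζ be a primitive d-th root of unity. For i ≠ j, the branches f_i = y^{p/d} - ζ^i x^{q/d} and f_j = y^{p/d} - ζ^j x^{q/d} have intersection number (f_i, f_j)_0 = pq/d² at the origin. -/

import Mathlib

open PowerSeries

/-- For `p, q` positive, `d = gcd p q`, `ζ` a primitive `d`-th root of unity and
`i ≠ j`, the intersection number of the branches `f_i = y^{p/d} - ζ^i x^{q/d}` and
`f_j = y^{p/d} - ζ^j x^{q/d}` at the origin, computed as the `t`-order of
`f_i(γ_j(t))` for the parameterization `γ_j(t) = (t^{p/d}, A t^{q/d})` with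
`A^{p/d} = ζ^j`, equals `pq/d²`. -/
theorem stmt1 (p q d : ℕ) (hp : 0 < p) (hq : 0 < q) (hd : d = Nat.gcd p q)
    (ζ : ℂ) (hζ : IsPrimitiveRoot ζ d) (i j : ℕ) (hi : i < d) (hj : j < d) (hij : i ≠ j)
    (A : ℂ) (hA : A ^ (p / d) = ζ ^ j) :
    ((C A * X ^ (q / d)) ^ (p / d)
        - C (ζ ^ i) * (X ^ (p / d)) ^ (q / d) : PowerSeries ℂ).order
      = (p * q / (d * d) : ℕ) := by
  have hdp : d ∣ p := hd ▸ Nat.gcd_dvd_left p q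
  have hdq : d ∣ q := hd ▸ Nat.gcd_dvd_right p q
  have hdiv : p * q / (d * d) = p / d * (q / d) := Nat.div_mul_div_comm hdp hdq |>.symm
  have hne : ζ ^ j - ζ ^ i ≠ 0 := by
    intro h
    exact hij ((hζ.pow_inj hj hi (sub_eq_zero.mp h)).symm)
  have h1 : ((C A * X ^ (q / d)) ^ (p / d)
        - C (ζ ^ i) * (X ^ (p / d)) ^ (q / d) : PowerSeries ℂ)
      = monomial (p / d * (q / d)) (ζ ^ j - ζ ^ i) := by
    rw [mul_pow, ← map_pow, hA, ← pow_mul, ← pow_mul, mul_comm (q / d) (p / d),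
      X_pow_eq, ← smul_eq_C_mul, ← smul_eq_C_mul, ← map_smul, ← map_smul,
      smul_eq_mul, smul_eq_mul, mul_one, mul_one, map_sub]
  rw [h1, order_monomial_of_ne_zero _ _ hne, hdiv]
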